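/- There exist subsets A_m ⊆ P_m^M, for 0 ≤ m ≤ ⌊|M|/2⌋, with #A_m = p_m − p_{m−1}, such that for every n with 2n ≤ |M|, the family B_n = ⋃_{0 ≤ m ≤ n} { (U_M^{n−m}/(n−m)!)(f) : f ∈ A_m } is a ℤ-basis of the free ℤ-module ℤP_n^M. -/

import Mathlib

open Finset

/-- The rank-`n` elements of the product of chains of lengths `M 0, …, M (k-1)`:
tuples `α` with `α i ≤ M i` for all `i` and `Σ α i = n`. -/
abbrev Pel {k : ℕ} (M : Fin k → ℕ) (n : ℕ) : Type :=
  {α : ∀ i, Fin (M i + 1) // ∑ i, (α i : ℕ) = n}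

/-- `|M| = M 1 + ⋯ + M k`, the rank of the top element of the product of chains. -/
abbrev totalM {k : ℕ} (M : Fin k → ℕ) : ℕ := ∑ i, M i

/-- The matrix entry of `U_M^(n-m)/(n-m)!` at `(α, β)` for `α` of rank `m` and `β` of
rank `n`: it is `∏ i, choose (β i) (α i)`, which vanishes unless `α ≤ β`. -/
def uEntry {k : ℕ} (M : Fin k → ℕ) {m n : ℕ} (α : Pel M m) (β : Pel M n) : ℕ :=
  ∏ i, Nat.choose (β.1 i : ℕ) (α.1 i : ℕ)

/-- `prevP M m = p_{m-1}`, the number of elements of rank `m - 1`, with `p_{-1} = 0`. -/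
def prevP {k : ℕ} (M : Fin k → ℕ) : ℕ → ℕ
  | 0 => 0
  | m + 1 => Fintype.card (Pel M m)

/-- The rank-symmetry bijection `α ↦ M - α` from rank `n` to rank `|M| - n`. -/
def cmpl {k : ℕ} (M : Fin k → ℕ) {n : ℕ} (α : Pel M n) : Pel M (totalM M - n) :=
  ⟨fun i => ⟨M i - (α.1 i : ℕ), by omega⟩, by
    have h2 : ∀ i, (α.1 i : ℕ) ≤ M i := fun i => Nat.lt_succ_iff.mp (α.1 i).isLt
    have key : ∑ i, (M i - (α.1 i : ℕ)) + ∑ i, (α.1 i : ℕ) = ∑ i, M i := by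
      rw [← Finset.sum_add_distrib]
      exact Finset.sum_congr rfl fun i _ => Nat.sub_add_cancel (h2 i)
    have h := α.2
    show ∑ i, (M i - (α.1 i : ℕ)) = (∑ i, M i) - n
    omega⟩

/-- The family `B` of elements of `ℤP_n^M` consisting, for each `m ≤ mtop`, of the images
`U_M^(n-m)/(n-m)! f` of the elements `f ∈ A m` (expressed via the binomial matrix
entries of `U_M^(n-m)/(n-m)!`). -/
def bFam {k : ℕ} (M : Fin k → ℕ) (A : (m : ℕ) → Finset (Pel M m)) (mtop n : ℕ) :
    ((m : Fin (mtop + 1)) × {f : Pel M (m : ℕ) // f ∈ A (m : ℕ)}) → (Pel M n → ℤ) :=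
  fun x β => ((uEntry M x.2.1 β : ℕ) : ℤ)

namespace IntBasis

variable {k : ℕ}

lemma pelExt {M : Fin k → ℕ} {m : ℕ} (a b : Pel M m)
    (h : ∀ i, (a.1 i : ℕ) = (b.1 i : ℕ)) : a = b :=
  Subtype.ext (funext fun i => Fin.ext (h i))

lemma uEntry_congr {M : Fin k → ℕ} {m₁ m₂ n₁ n₂ : ℕ} {α₁ : Pel M m₁} {α₂ : Pel M m₂}
    {β₁ : Pel M n₁} {β₂ : Pel M n₂}
    (hα : ∀ i, (α₁.1 i : ℕ) = (α₂.1 i : ℕ)) (hβ : ∀ i, (β₁.1 i : ℕ) = (β₂.1 i : ℕ)) :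
    uEntry M α₁ β₁ = uEntry M α₂ β₂ :=
  Finset.prod_congr rfl fun i _ => by rw [hα i, hβ i]

lemma uEntry_eq_zero_of_lt {M : Fin k → ℕ} {m n : ℕ} (α : Pel M m) (β : Pel M n)
    (h : n < m) : uEntry M α β = 0 := by
  by_contra hne
  have hle : ∀ i, (α.1 i : ℕ) ≤ (β.1 i : ℕ) := by
    intro i
    by_contra hlt
    push_neg at hlt
    exact hne (Finset.prod_eq_zero (Finset.mem_univ i) (Nat.choose_eq_zero_of_lt hlt))
  have : m ≤ n := by
    rw [← α.2, ← β.2]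
    exact Finset.sum_le_sum fun i _ => hle i
  omega

/-- The ballot condition defining the generator sets. -/
def ballotB : ∀ {k : ℕ}, (Fin k → ℕ) → (Fin k → ℕ) → Bool
  | 0, _, _ => true
  | k + 1, M, a =>
      ballotB (fun i : Fin k => M i.castSucc) (fun i : Fin k => a i.castSucc) &&
        decide (2 * (∑ i : Fin k, a i.castSucc) + a (Fin.last k) ≤ ∑ i : Fin k, M i.castSucc)

lemma ballotB_two_sum_le : ∀ {k : ℕ} (M a : Fin k → ℕ), (∀ i, a i ≤ M i) →
    ballotB M a = true → 2 * (∑ i, a i) ≤ ∑ i, M i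
  | 0, _, _, _, _ => by simp
  | k + 1, M, a, hle, hb => by
    rw [ballotB, Bool.and_eq_true, decide_eq_true_eq] at hb
    have h1 := ballotB_two_sum_le (fun i => M i.castSucc) (fun i => a i.castSucc)
      (fun i => hle _) hb.1
    have h2 := hb.2
    have h3 := hle (Fin.last k)
    rw [Fin.sum_univ_castSucc (f := a), Fin.sum_univ_castSucc (f := M)]
    omega

/-- Generators: the ballot elements of rank `m`. -/
def ballotA (M : Fin k → ℕ) (m : ℕ) : Finset (Pel M m) :=
  univ.filter fun f => ballotB M (fun i => (f.1 i : ℕ)) = true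

lemma mem_ballotA {M : Fin k → ℕ} {m : ℕ} {f : Pel M m} :
    f ∈ ballotA M m ↔ ballotB M (fun i => (f.1 i : ℕ)) = true := by
  simp [ballotA]

/-- Index of the family `B_n`, generators of rank `m ≤ mtop`. -/
abbrev Gen (M : Fin k → ℕ) (mtop : ℕ) : Type :=
  (m : Fin (mtop + 1)) × {f : Pel M (m : ℕ) // f ∈ ballotA M (m : ℕ)}

lemma genExt {M : Fin k → ℕ} {mtop : ℕ} (a b : Gen M mtop)
    (h : ∀ i, (a.2.1.1 i : ℕ) = (b.2.1.1 i : ℕ)) : a = b := by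
  obtain ⟨ma, f1, hf1⟩ := a
  obtain ⟨mb, f2, hf2⟩ := b
  have hm : ma = mb := by
    apply Fin.ext
    have e1 := f1.2; have e2 := f2.2
    rw [← e1, ← e2]
    exact Finset.sum_congr rfl fun i _ => h i
  subst hm
  have hf : (⟨f1, hf1⟩ : {f : Pel _ (ma : ℕ) // f ∈ ballotA _ (ma : ℕ)}) = ⟨f2, hf2⟩ :=
    Subtype.ext (pelExt _ _ h)
  rw [hf]

lemma gen_sum {M : Fin k → ℕ} {mtop : ℕ} (a : Gen M mtop) :
    ∑ i, (a.2.1.1 i : ℕ) = (a.1 : ℕ) := a.2.1.2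

/-- Rows of a square matrix with unit determinant are independent and span. -/
lemma unimodular_rows {ι : Type*} [Fintype ι] [DecidableEq ι] (A : Matrix ι ι ℤ)
    (h : IsUnit A.det) :
    LinearIndependent ℤ (fun i => A i) ∧
      Submodule.span ℤ (Set.range fun i => A i) = ⊤ := by
  have hsum : ∀ c : ι → ℤ, Matrix.vecMul c A = ∑ i, c i • A i := by
    intro c
    funext j
    simp [Matrix.vecMul, dotProduct, Finset.sum_apply]
  constructor
  · rw [Fintype.linearIndependent_iff]
    intro g hg i
    have hv : Matrix.vecMul g A = 0 := by rw [hsum]; exact hg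
    have : g = 0 := by
      have := congrArg (fun v => Matrix.vecMul v A⁻¹) hv
      simpa [Matrix.vecMul_vecMul, Matrix.mul_nonsing_inv A h, Matrix.vecMul_one]
        using this
    simp [this]
  · rw [eq_top_iff]
    intro y _
    have hy : y = Matrix.vecMul (Matrix.vecMul y A⁻¹) A := by
      rw [Matrix.vecMul_vecMul, Matrix.nonsing_inv_mul A h, Matrix.vecMul_one]
    rw [hy, hsum]
    exact Submodule.sum_mem _ fun i _ =>
      Submodule.smul_mem _ _ (Submodule.subset_span ⟨i, rfl⟩)

end IntBasis

namespace IntBasis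

variable {k : ℕ}

/-- restriction of `M` to the first `k` coordinates -/
abbrev Mres (M : Fin (k + 1) → ℕ) : Fin k → ℕ := fun i => M i.castSucc

lemma total_split (M : Fin (k + 1) → ℕ) :
    totalM M = totalM (Mres M) + M (Fin.last k) := Fin.sum_univ_castSucc _

lemma pel_split {M : Fin (k + 1) → ℕ} {m : ℕ} (f : Pel M m) :
    (∑ i : Fin k, (f.1 i.castSucc : ℕ)) + (f.1 (Fin.last k) : ℕ) = m := by
  have h := f.2; rw [Fin.sum_univ_castSucc] at h; exact h

lemma pel_init_le {M : Fin (k + 1) → ℕ} {m : ℕ} (f : Pel M m) :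
    (∑ i : Fin k, (f.1 i.castSucc : ℕ)) ≤ totalM (Mres M) :=
  Finset.sum_le_sum fun i _ => Fin.is_le _

/-- possible last coordinates of a rank-`n` element -/
abbrev Jt (M : Fin (k + 1) → ℕ) (n : ℕ) : Type :=
  {j : Fin (M (Fin.last k) + 1) // (j : ℕ) ≤ n ∧ n ≤ totalM (Mres M) + (j : ℕ)}

/-- the rank-`n` slice of the product of chains, fibered by the last coordinate -/
abbrev ColIdx (M : Fin (k + 1) → ℕ) (n : ℕ) : Type :=
  Σ j : Jt M n, Pel (Mres M) (n - (j.1 : ℕ))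

lemma colExt {M : Fin (k + 1) → ℕ} {n : ℕ} (a b : ColIdx M n)
    (hj : (a.1.1 : ℕ) = (b.1.1 : ℕ)) (hv : ∀ i, (a.2.1 i : ℕ) = (b.2.1 i : ℕ)) :
    a = b := by
  obtain ⟨ja, γa⟩ := a
  obtain ⟨jb, γb⟩ := b
  have h1 : ja = jb := Subtype.ext (Fin.ext hj)
  subst h1
  rw [show γa = γb from pelExt _ _ hv]

/-- `Pel M n` is equivalent to the disjoint union of its last-coordinate fibers. -/
def ePel (M : Fin (k + 1) → ℕ) (n : ℕ) : Pel M n ≃ ColIdx M n where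
  toFun f :=
    ⟨⟨f.1 (Fin.last k), by
        have := pel_split f; omega, by
        have := pel_split f; have := pel_init_le f; omega⟩,
      ⟨Fin.init f.1, by
        have := pel_split f
        simpa [Fin.init] using by omega⟩⟩
  invFun z :=
    ⟨Fin.snoc z.2.1 z.1.1, by
      rw [Fin.sum_univ_castSucc]
      have h1 : ∀ i : Fin k, ((Fin.snoc z.2.1 z.1.1 : ∀ i, Fin (M i + 1)) i.castSucc : ℕ)
          = (z.2.1 i : ℕ) := fun i => by rw [Fin.snoc_castSucc]
      have h2 : ((Fin.snoc z.2.1 z.1.1 : ∀ i, Fin (M i + 1)) (Fin.last k) : ℕ)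
          = (z.1.1 : ℕ) := by rw [Fin.snoc_last]
      rw [Finset.sum_congr rfl fun i _ => h1 i, h2, z.2.2]
      have := z.1.2; omega⟩
  left_inv f := by
    apply pelExt
    intro i
    induction i using Fin.lastCases with
    | last => simp
    | cast i => simp [Fin.init]
  right_inv z := by
    apply colExt
    · simp
    · intro i
      simp [Fin.init]

lemma uEntry_split {M : Fin (k + 1) → ℕ} {m' n' : ℕ} (f : Pel M m') (g : Pel M n') :
    (uEntry M f g : ℕ) =
      (∏ i : Fin k, Nat.choose (g.1 i.castSucc : ℕ) (f.1 i.castSucc : ℕ)) *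
        Nat.choose (g.1 (Fin.last k) : ℕ) (f.1 (Fin.last k) : ℕ) :=
  Fin.prod_univ_castSucc _

end IntBasis

namespace IntBasis

variable {k : ℕ}

section Rows

variable (M : Fin (k + 1) → ℕ) (n : ℕ)

/-- The index of rows: generators at levels `m ≤ min n (totalM M - n)`. -/
abbrev Row : Type := Gen M (min n (totalM M - n))

variable {M n}

def rowR (x : Row M n) : ℕ := ∑ i : Fin k, (x.2.1.1 i.castSucc : ℕ)

def rowT (x : Row M n) : ℕ := (x.2.1.1 (Fin.last k) : ℕ)

def rowA (x : Row M n) : Pel (Mres M) (rowR x) := ⟨fun i => x.2.1.1 i.castSucc, rfl⟩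

lemma row_sum (x : Row M n) : rowR x + rowT x = (x.1 : ℕ) := pel_split x.2.1

lemma row_m_le (x : Row M n) : (x.1 : ℕ) ≤ min n (totalM M - n) := Fin.is_le _

lemma row_t_le (x : Row M n) : rowT x ≤ M (Fin.last k) := Fin.is_le _

lemma row_ballot (x : Row M n) :
    ballotB (Mres M) (fun i => (x.2.1.1 i.castSucc : ℕ)) = true ∧
      2 * rowR x + rowT x ≤ totalM (Mres M) := by
  have h := mem_ballotA.mp x.2.2
  rw [ballotB, Bool.and_eq_true, decide_eq_true_eq] at h
  exact h

lemma rowA_mem (x : Row M n) : rowA x ∈ ballotA (Mres M) (rowR x) :=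
  mem_ballotA.mpr (row_ballot x).1

lemma val_snoc {M : Fin (k + 1) → ℕ} (α : ∀ i : Fin k, Fin (Mres M i + 1))
    (tf : Fin (M (Fin.last k) + 1)) :
    (fun i => ((Fin.snoc α tf : ∀ i, Fin (M i + 1)) i : ℕ))
      = Fin.snoc (fun i => (α i : ℕ)) (tf : ℕ) := by
  funext i
  induction i using Fin.lastCases with
  | last => simp
  | cast i => simp

lemma ballotB_snoc (Mf : Fin (k + 1) → ℕ) (a : Fin k → ℕ) (t : ℕ) :
    ballotB Mf (Fin.snoc a t) =
      (ballotB (fun i => Mf i.castSucc) a &&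
        decide (2 * (∑ i, a i) + t ≤ ∑ i : Fin k, Mf i.castSucc)) := by
  rw [ballotB]
  simp

lemma snoc_sum {M : Fin (k + 1) → ℕ} {r t : ℕ} (α : Pel (Mres M) r)
    (tf : Fin (M (Fin.last k) + 1)) (htf : (tf : ℕ) = t) :
    ∑ i, ((Fin.snoc α.1 tf : ∀ i, Fin (M i + 1)) i : ℕ) = r + t := by
  have h := congrFun (val_snoc α.1 tf)
  calc ∑ i, ((Fin.snoc α.1 tf : ∀ i, Fin (M i + 1)) i : ℕ)
      = ∑ i, (Fin.snoc (fun i => ((α.1 i : ℕ))) (tf : ℕ) : Fin (k+1) → ℕ) i :=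
        Finset.sum_congr rfl fun i _ => h i
    _ = r + t := by
        rw [Fin.sum_univ_castSucc]
        have h1 : ∀ i : Fin k,
            (Fin.snoc (fun i => ((α.1 i : ℕ))) (tf : ℕ) : Fin (k+1) → ℕ) i.castSucc
              = (α.1 i : ℕ) := fun i => by rw [Fin.snoc_castSucc]
        have h2 : (Fin.snoc (fun i => ((α.1 i : ℕ))) (tf : ℕ) : Fin (k+1) → ℕ) (Fin.last k)
            = t := by rw [Fin.snoc_last, htf]
        rw [Finset.sum_congr rfl fun i _ => h1 i, h2, α.2]

/-- Constructor for rows with given generator data. -/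
def rowOf (r : ℕ) (α : Pel (Mres M) r) (hα : α ∈ ballotA (Mres M) r) (t : ℕ)
    (ht : t ≤ M (Fin.last k)) (h2 : 2 * r + t ≤ totalM (Mres M))
    (hm : r + t ≤ min n (totalM M - n)) : Row M n :=
  ⟨⟨r + t, by omega⟩,
    ⟨⟨Fin.snoc α.1 ⟨t, by omega⟩, snoc_sum α _ rfl⟩, by
      apply mem_ballotA.mpr
      rw [show (fun i => ((⟨Fin.snoc α.1 ⟨t, by omega⟩, snoc_sum α _ rfl⟩ :
            Pel M (r + t)).1 i : ℕ)) = Fin.snoc (fun i => (α.1 i : ℕ)) t from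
          val_snoc α.1 ⟨t, by omega⟩]
      rw [ballotB_snoc, Bool.and_eq_true, decide_eq_true_eq]
      refine ⟨mem_ballotA.mp hα, ?_⟩
      rw [α.2]
      exact h2⟩⟩

@[simp] lemma rowOf_init (r : ℕ) (α : Pel (Mres M) r) (hα : α ∈ ballotA (Mres M) r)
    (t : ℕ) (ht : t ≤ M (Fin.last k)) (h2 : 2 * r + t ≤ totalM (Mres M))
    (hm : r + t ≤ min n (totalM M - n)) (i : Fin k) :
    ((rowOf r α hα t ht h2 hm : Row M n).2.1.1 i.castSucc : ℕ) = (α.1 i : ℕ) := by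
  show ((Fin.snoc α.1 _ : ∀ i, Fin (M i + 1)) i.castSucc : ℕ) = _
  rw [Fin.snoc_castSucc]

@[simp] lemma rowOf_last (r : ℕ) (α : Pel (Mres M) r) (hα : α ∈ ballotA (Mres M) r)
    (t : ℕ) (ht : t ≤ M (Fin.last k)) (h2 : 2 * r + t ≤ totalM (Mres M))
    (hm : r + t ≤ min n (totalM M - n)) :
    ((rowOf r α hα t ht h2 hm : Row M n).2.1.1 (Fin.last k) : ℕ) = t := by
  show ((Fin.snoc α.1 _ : ∀ i, Fin (M i + 1)) (Fin.last k) : ℕ) = _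
  rw [Fin.snoc_last]

lemma rowOf_rowR (r : ℕ) (α : Pel (Mres M) r) (hα : α ∈ ballotA (Mres M) r)
    (t : ℕ) (ht : t ≤ M (Fin.last k)) (h2 : 2 * r + t ≤ totalM (Mres M))
    (hm : r + t ≤ min n (totalM M - n)) :
    rowR (rowOf r α hα t ht h2 hm : Row M n) = r := by
  rw [rowR, Finset.sum_congr rfl fun i _ => rowOf_init r α hα t ht h2 hm i, α.2]

lemma rowOf_rowT (r : ℕ) (α : Pel (Mres M) r) (hα : α ∈ ballotA (Mres M) r)
    (t : ℕ) (ht : t ≤ M (Fin.last k)) (h2 : 2 * r + t ≤ totalM (Mres M))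
    (hm : r + t ≤ min n (totalM M - n)) :
    rowT (rowOf r α hα t ht h2 hm : Row M n) = t :=
  rowOf_last r α hα t ht h2 hm

lemma row_r_le_min (x : Row M n) : 2 * rowR x ≤ totalM (Mres M) := by
  have := (row_ballot x).2; omega

end Rows

end IntBasis

namespace IntBasis

variable {k : ℕ}

section Shift

variable (M : Fin (k + 1) → ℕ) (n : ℕ)
variable (eF : ∀ l : ℕ, l ≤ totalM (Mres M) →
  (Pel (Mres M) l ≃ Gen (Mres M) (min l (totalM (Mres M) - l))))

/-- start of the column window for a generator of level `r` -/
def j0 (r : ℕ) : ℕ := n + r - totalM (Mres M)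

variable {M n}

variable (hn : n ≤ totalM M)

lemma col_le (z : ColIdx M n) : n - (z.1.1 : ℕ) ≤ totalM (Mres M) := by
  have := z.1.2.2; omega

lemma erow_facts (hn : n ≤ totalM M) (x : Row M n) :
    j0 M n (rowR x) + rowT x < M (Fin.last k) + 1 ∧
    j0 M n (rowR x) + rowT x ≤ n ∧
    n ≤ totalM (Mres M) + (j0 M n (rowR x) + rowT x) ∧
    n - (j0 M n (rowR x) + rowT x) ≤ totalM (Mres M) ∧
    rowR x ≤ n - (j0 M n (rowR x) + rowT x) ∧
    rowR x ≤ totalM (Mres M) - (n - (j0 M n (rowR x) + rowT x)) := by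
  have hmin := le_min_iff.mp (row_m_le x)
  have hsum := row_sum x
  have h2 := (row_ballot x).2
  have ht := row_t_le x
  have htot := total_split M
  rw [j0]
  omega

/-- the generator data of a row, packaged for its column window -/
def gAt (hn : n ≤ totalM M) (x : Row M n) : Gen (Mres M) (min (n - (j0 M n (rowR x) + rowT x))
    (totalM (Mres M) - (n - (j0 M n (rowR x) + rowT x)))) :=
  ⟨⟨rowR x, Nat.lt_succ_iff.mpr (le_min (erow_facts hn x).2.2.2.2.1
      (erow_facts hn x).2.2.2.2.2)⟩,
    ⟨rowA x, rowA_mem x⟩⟩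

/-- the forward reindexing: a row is sent to its diagonal column -/
def ErowFun (hn : n ≤ totalM M) (x : Row M n) : ColIdx M n :=
  ⟨⟨⟨j0 M n (rowR x) + rowT x, (erow_facts hn x).1⟩,
      (erow_facts hn x).2.1, (erow_facts hn x).2.2.1⟩,
    (eF (n - (j0 M n (rowR x) + rowT x)) (erow_facts hn x).2.2.2.1).symm (gAt hn x)⟩

lemma ecol_facts (z : ColIdx M n) :
    ((eF (n - (z.1.1 : ℕ)) (col_le z) z.2).1 : ℕ)
        + ((z.1.1 : ℕ) - j0 M n ((eF (n - (z.1.1 : ℕ)) (col_le z) z.2).1 : ℕ))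
      ≤ min n (totalM M - n) ∧
    (z.1.1 : ℕ) - j0 M n ((eF (n - (z.1.1 : ℕ)) (col_le z) z.2).1 : ℕ) ≤ M (Fin.last k) ∧
    2 * ((eF (n - (z.1.1 : ℕ)) (col_le z) z.2).1 : ℕ)
        + ((z.1.1 : ℕ) - j0 M n ((eF (n - (z.1.1 : ℕ)) (col_le z) z.2).1 : ℕ))
      ≤ totalM (Mres M) ∧
    j0 M n ((eF (n - (z.1.1 : ℕ)) (col_le z) z.2).1 : ℕ) ≤ (z.1.1 : ℕ) := by
  have hg1 := le_min_iff.mp (Fin.is_le (eF (n - (z.1.1 : ℕ)) (col_le z) z.2).1)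
  have hj1 := z.1.2.1
  have hj2 := z.1.2.2
  have hjc : (z.1.1 : ℕ) ≤ M (Fin.last k) := Fin.is_le _
  have htot := total_split M
  rw [j0]
  omega

/-- the backward reindexing -/
def ErowInv (z : ColIdx M n) : Row M n :=
  rowOf ((eF (n - (z.1.1 : ℕ)) (col_le z) z.2).1 : ℕ)
    (eF (n - (z.1.1 : ℕ)) (col_le z) z.2).2.1
    (eF (n - (z.1.1 : ℕ)) (col_le z) z.2).2.2
    ((z.1.1 : ℕ) - j0 M n ((eF (n - (z.1.1 : ℕ)) (col_le z) z.2).1 : ℕ))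
    (ecol_facts eF z).2.1 (ecol_facts eF z).2.2.1 (ecol_facts eF z).1

lemma eF_val_congr {l₁ l₂ : ℕ} (hl : l₁ = l₂) (h₁ : l₁ ≤ totalM (Mres M))
    (h₂ : l₂ ≤ totalM (Mres M))
    (g₁ : Gen (Mres M) (min l₁ (totalM (Mres M) - l₁)))
    (g₂ : Gen (Mres M) (min l₂ (totalM (Mres M) - l₂)))
    (hg : ∀ i, (g₁.2.1.1 i : ℕ) = (g₂.2.1.1 i : ℕ)) (i : Fin k) :
    (((eF l₁ h₁).symm g₁).1 i : ℕ) = (((eF l₂ h₂).symm g₂).1 i : ℕ) := by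
  subst hl
  rw [genExt g₁ g₂ hg]

/-- the reindexing equivalence between rows and columns -/
def Erow (hn : n ≤ totalM M) : Row M n ≃ ColIdx M n where
  toFun := ErowFun eF hn
  invFun := ErowInv eF
  left_inv x := by
    have hg : eF (n - ((ErowFun eF hn x).1.1 : ℕ)) (col_le (ErowFun eF hn x)) (ErowFun eF hn x).2
        = gAt hn x := Equiv.apply_symm_apply _ _
    apply genExt
    intro i
    induction i using Fin.lastCases with
    | last =>
      show ((ErowInv eF (ErowFun eF hn x)).2.1.1 (Fin.last k) : ℕ) = rowT x
      rw [ErowInv]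
      rw [rowOf_last]
      have h1 : ((eF (n - ((ErowFun eF hn x).1.1 : ℕ)) (col_le (ErowFun eF hn x))
          (ErowFun eF hn x).2).1 : ℕ) = rowR x := by rw [hg]; rfl
      rw [h1]
      show (j0 M n (rowR x) + rowT x) - j0 M n (rowR x) = rowT x
      omega
    | cast i =>
      show ((ErowInv eF (ErowFun eF hn x)).2.1.1 i.castSucc : ℕ) = (x.2.1.1 i.castSucc : ℕ)
      rw [ErowInv]
      rw [rowOf_init]
      rw [hg]
      rfl
  right_inv z := by
    have hval2 : j0 M n (rowR (ErowInv eF z)) + rowT (ErowInv eF z) = (z.1.1 : ℕ) := by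
      rw [ErowInv, rowOf_rowR, rowOf_rowT]
      have := (ecol_facts eF z).2.2.2
      omega
    apply colExt _ _ hval2
    intro i
    show (((eF (n - (j0 M n (rowR (ErowInv eF z)) + rowT (ErowInv eF z))) _).symm
        (gAt hn (ErowInv eF z))).1 i : ℕ) = (z.2.1 i : ℕ)
    rw [eF_val_congr eF (show n - (j0 M n (rowR (ErowInv eF z)) + rowT (ErowInv eF z))
        = n - (z.1.1 : ℕ) by omega) _ (col_le z) (gAt hn (ErowInv eF z))
        (eF (n - (z.1.1 : ℕ)) (col_le z) z.2) ?hv i]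
    · rw [Equiv.symm_apply_apply]
    case hv =>
      intro i'
      show ((ErowInv eF z).2.1.1 i'.castSucc : ℕ) = _
      rw [ErowInv, rowOf_init]

end Shift

end IntBasis

namespace IntBasis

variable {k : ℕ}

section KeyId

variable (M : Fin (k + 1) → ℕ) (n : ℕ)
variable (eF : ∀ l : ℕ, l ≤ totalM (Mres M) →
  (Pel (Mres M) l ≃ Gen (Mres M) (min l (totalM (Mres M) - l))))

/-- the square matrix of the family at level `l` for the smaller product -/
def Bsq (l : ℕ) (hl : l ≤ totalM (Mres M)) :
    Matrix (Pel (Mres M) l) (Pel (Mres M) l) ℤ :=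
  Matrix.of fun x y => ((uEntry (Mres M) ((eF l hl x).2.1) y : ℕ) : ℤ)

variable {M n}

variable (n) in
/-- block diagonal matrix of the level matrices -/
def Vmat : Matrix (ColIdx M n) (ColIdx M n) ℤ :=
  Matrix.of fun z w =>
    if (z.1.1 : ℕ) = (w.1.1 : ℕ) then
      ((uEntry (Mres M) ((eF (n - (z.1.1 : ℕ)) (col_le z) z.2).2.1) w.2 : ℕ) : ℤ)
    else 0

variable (n) in
/-- the transition matrix -/
noncomputable def Smat : Matrix (Row M n) (ColIdx M n) ℤ :=
  Matrix.of fun x z =>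
    if totalM (Mres M) < (n - (z.1.1 : ℕ)) + rowR x then
      (Nat.choose (z.1.1 : ℕ) (rowT x) : ℤ) *
        Matrix.vecMul (fun β => ((uEntry (Mres M) (rowA x) β : ℕ) : ℤ))
          (Bsq M eF (n - (z.1.1 : ℕ)) (col_le z))⁻¹ z.2
    else if (fun i => (((eF (n - (z.1.1 : ℕ)) (col_le z) z.2).2.1).1 i : ℕ))
        = (fun i => ((rowA x).1 i : ℕ)) then
      (Nat.choose (z.1.1 : ℕ) (rowT x) : ℤ)
    else 0

lemma lhs_split (x : Row M n) (w : ColIdx M n) :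
    (uEntry M x.2.1 ((ePel M n).symm w) : ℕ) =
      uEntry (Mres M) (rowA x) w.2 * Nat.choose (w.1.1 : ℕ) (rowT x) := by
  have h1 : ∀ i : Fin k, ((((ePel M n).symm w).1 i.castSucc : ℕ)) = (w.2.1 i : ℕ) := by
    intro i
    show ((Fin.snoc w.2.1 w.1.1 : ∀ i, Fin (M i + 1)) i.castSucc : ℕ) = _
    rw [Fin.snoc_castSucc]
  have h2 : (((ePel M n).symm w).1 (Fin.last k) : ℕ) = (w.1.1 : ℕ) := by
    show ((Fin.snoc w.2.1 w.1.1 : ∀ i, Fin (M i + 1)) (Fin.last k) : ℕ) = _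
    rw [Fin.snoc_last]
  rw [uEntry_split]
  congr 1
  · exact Finset.prod_congr rfl fun i _ => by rw [h1 i]; rfl
  · rw [h2]; rfl

lemma key_identity (hF : ∀ l hl, IsUnit (Bsq M eF l hl).det) (x : Row M n)
    (w : ColIdx M n) :
    ((uEntry M x.2.1 ((ePel M n).symm w) : ℕ) : ℤ) =
      ∑ z : ColIdx M n, Smat n eF x z * Vmat n eF z w := by
  have hLHS : ((uEntry M x.2.1 ((ePel M n).symm w) : ℕ) : ℤ) =
      (Nat.choose (w.1.1 : ℕ) (rowT x) : ℤ) *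
        ((uEntry (Mres M) (rowA x) w.2 : ℕ) : ℤ) := by
    rw [lhs_split]; push_cast; ring
  rw [hLHS]
  rw [← Finset.univ_sigma_univ, Finset.sum_sigma]
  rw [Finset.sum_eq_single w.1]
  · -- inner sum over the fiber at w.1
    set l := n - (w.1.1 : ℕ) with hl
    by_cases hov : totalM (Mres M) < l + rowR x
    · -- overflow column: use the inverse matrix
      have hstep : ∀ γ : Pel (Mres M) l,
          Smat n eF x ⟨w.1, γ⟩ * Vmat n eF ⟨w.1, γ⟩ w =
            (Nat.choose (w.1.1 : ℕ) (rowT x) : ℤ) *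
              (Matrix.vecMul (fun β => ((uEntry (Mres M) (rowA x) β : ℕ) : ℤ))
                (Bsq M eF l (col_le ⟨w.1, w.2⟩))⁻¹ γ *
               Bsq M eF l (col_le ⟨w.1, w.2⟩) γ w.2) := by
        intro γ
        have hov' : totalM (Mres M) < n - (w.1.1 : ℕ) + rowR x := hov
        rw [Smat, Vmat]
        simp only [Matrix.of_apply, if_pos hov', eq_self_iff_true, if_true, Bsq]
        exact mul_assoc _ _ _
      rw [Finset.sum_congr rfl fun γ _ => hstep γ, ← Finset.mul_sum]
      congr 1
      have : ∑ γ : Pel (Mres M) l,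
          Matrix.vecMul (fun β => ((uEntry (Mres M) (rowA x) β : ℕ) : ℤ))
            (Bsq M eF l (col_le ⟨w.1, w.2⟩))⁻¹ γ *
            Bsq M eF l (col_le ⟨w.1, w.2⟩) γ w.2 =
          Matrix.vecMul (Matrix.vecMul (fun β => ((uEntry (Mres M) (rowA x) β : ℕ) : ℤ))
            (Bsq M eF l (col_le ⟨w.1, w.2⟩))⁻¹) (Bsq M eF l (col_le ⟨w.1, w.2⟩)) w.2 := rfl
      rw [this, Matrix.vecMul_vecMul, Matrix.nonsing_inv_mul _ (hF _ _),
        Matrix.vecMul_one]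
    · -- no overflow
      push_neg at hov
      by_cases hrl : rowR x ≤ l
      · -- the generator is alive at this level: single matching term
        have hgmem : rowR x < min l (totalM (Mres M) - l) + 1 :=
          Nat.lt_succ_iff.mpr (le_min hrl (by omega))
        set gw : Gen (Mres M) (min l (totalM (Mres M) - l)) :=
          ⟨⟨rowR x, hgmem⟩, ⟨rowA x, rowA_mem x⟩⟩ with hgw
        set γ0 : Pel (Mres M) l := (eF l (col_le ⟨w.1, w.2⟩)).symm gw with hγ0
        rw [Finset.sum_eq_single γ0]
        · have hef : eF l (col_le ⟨w.1, w.2⟩) γ0 = gw := Equiv.apply_symm_apply _ _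
          rw [Smat, Vmat]
          simp only [Matrix.of_apply, eq_self_iff_true, if_true]
          rw [if_neg (by omega), if_pos (by rw [hef])]
          have : uEntry (Mres M) ((eF l (col_le ⟨w.1, w.2⟩) γ0).2.1) w.2
              = uEntry (Mres M) (rowA x) w.2 :=
            uEntry_congr (by rw [hef]; intro i; rfl) (fun i => rfl)
          rw [this]
        · intro γ _ hne
          rw [Smat]
          simp only [Matrix.of_apply]
          rw [if_neg (by omega), if_neg, zero_mul]
          intro hfun
          apply hne
          have : eF l (col_le ⟨w.1, w.2⟩) γ = gw := by
            apply genExt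
            intro i
            exact congrFun hfun i
          have h2 : γ = (eF l (col_le ⟨w.1, w.2⟩)).symm gw := by
            rw [← this, Equiv.symm_apply_apply]
          rw [h2, hγ0]
        · intro habs
          exact absurd (Finset.mem_univ _) habs
      · -- level too low: everything vanishes
        push_neg at hrl
        have hzero : ((uEntry (Mres M) (rowA x) w.2 : ℕ) : ℤ) = 0 := by
          rw [uEntry_eq_zero_of_lt (rowA x) w.2 hrl]; rfl
        rw [hzero, mul_zero]
        symm
        apply Finset.sum_eq_zero
        intro γ _
        rw [Smat]
        simp only [Matrix.of_apply]
        rw [if_neg (by omega), if_neg, zero_mul]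
        intro hfun
        have hsum1 : ∑ i, (((eF l (col_le ⟨w.1, γ⟩) γ).2.1).1 i : ℕ)
            = ((eF l (col_le ⟨w.1, γ⟩) γ).1 : ℕ) := gen_sum _
        have hsum2 : ∑ i, ((rowA x).1 i : ℕ) = rowR x := (rowA x).2
        have hle : ((eF l (col_le ⟨w.1, γ⟩) γ).1 : ℕ) ≤ min l (totalM (Mres M) - l) :=
          Fin.is_le _
        have : ∑ i, (((eF l (col_le ⟨w.1, γ⟩) γ).2.1).1 i : ℕ)
            = ∑ i, ((rowA x).1 i : ℕ) :=
          Finset.sum_congr rfl fun i _ => congrFun hfun i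
        have hmin := le_min_iff.mp hle
        omega
  · -- other fibers contribute zero
    intro j _ hj
    apply Finset.sum_eq_zero
    intro γ _
    have : ((j.1 : ℕ) = (w.1.1 : ℕ)) → False := by
      intro hval
      exact hj (Subtype.ext (Fin.ext hval))
    rw [Vmat]
    simp only [Matrix.of_apply]
    rw [if_neg this, mul_zero]
  · intro habs
    exact absurd (Finset.mem_univ _) habs

end KeyId

end IntBasis

namespace IntBasis

lemma choose_window (j₀ b a : ℕ) :
    Nat.choose (j₀ + b) a =
      ∑ c ∈ Finset.range (a + 1), Nat.choose j₀ (a - c) * Nat.choose b c := by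
  calc Nat.choose (j₀ + b) a
      = ∑ c ∈ Finset.range (a + 1), Nat.choose j₀ c * Nat.choose b (a - c) := by
        rw [Nat.add_choose_eq, Finset.Nat.sum_antidiagonal_eq_sum_range_succ_mk]
    _ = ∑ c ∈ Finset.range (a + 1),
          (fun c => Nat.choose j₀ (a - c) * Nat.choose b c) (a + 1 - 1 - c) := by
        apply Finset.sum_congr rfl
        intro c hc
        rw [Finset.mem_range] at hc
        have h1 : a + 1 - 1 - c = a - c := by omega
        have h2 : a - (a - c) = c := by omega
        simp only [h1, h2]
    _ = ∑ c ∈ Finset.range (a + 1), Nat.choose j₀ (a - c) * Nat.choose b c := by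
        simpa using Finset.sum_range_reflect
          (fun c => Nat.choose j₀ (a - c) * Nat.choose b c) (a + 1)

/-- the binomial window matrix is unimodular -/
lemma det_window (j₀ s : ℕ) :
    (Matrix.of fun a b : Fin (s + 1) =>
      ((Nat.choose (j₀ + (b : ℕ)) (a : ℕ) : ℕ) : ℤ)).det = 1 := by
  set L : Matrix (Fin (s + 1)) (Fin (s + 1)) ℤ :=
    Matrix.of fun a c => if (c : ℕ) ≤ (a : ℕ) then
      ((Nat.choose j₀ ((a : ℕ) - (c : ℕ)) : ℕ) : ℤ) else 0 with hL
  set U : Matrix (Fin (s + 1)) (Fin (s + 1)) ℤ :=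
    Matrix.of fun c b => ((Nat.choose (b : ℕ) (c : ℕ) : ℕ) : ℤ) with hU
  have hfact : (Matrix.of fun a b : Fin (s + 1) =>
      ((Nat.choose (j₀ + (b : ℕ)) (a : ℕ) : ℕ) : ℤ)) = L * U := by
    ext a b
    rw [Matrix.mul_apply]
    refine Eq.symm ?_
    have hterm : ∀ c : Fin (s + 1), L a c * U c b =
        (fun c : ℕ => if c ≤ (a : ℕ) then
          ((Nat.choose j₀ ((a : ℕ) - c) * Nat.choose (b : ℕ) c : ℕ) : ℤ) else 0) (c : ℕ) := by
      intro c
      simp only [hL, hU, Matrix.of_apply]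
      by_cases h : (c : ℕ) ≤ (a : ℕ)
      · rw [if_pos h, if_pos h]; push_cast; ring
      · rw [if_neg h, if_neg h, zero_mul]
    calc ∑ c : Fin (s + 1), L a c * U c b
        = ∑ c ∈ Finset.range (s + 1), (fun c : ℕ => if c ≤ (a : ℕ) then
            ((Nat.choose j₀ ((a : ℕ) - c) * Nat.choose (b : ℕ) c : ℕ) : ℤ) else 0) c := by
          rw [← Fin.sum_univ_eq_sum_range]
          exact Finset.sum_congr rfl fun c _ => hterm c
      _ = ∑ c ∈ Finset.range ((a : ℕ) + 1), (fun c : ℕ => if c ≤ (a : ℕ) then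
            ((Nat.choose j₀ ((a : ℕ) - c) * Nat.choose (b : ℕ) c : ℕ) : ℤ) else 0) c := by
          rw [Finset.sum_subset (Finset.range_subset_range.mpr (by omega : (a : ℕ) + 1 ≤ s + 1))
            (fun c _ hc => by
              rw [Finset.mem_range, not_lt] at hc
              exact if_neg (by omega))]
      _ = ∑ c ∈ Finset.range ((a : ℕ) + 1),
            ((Nat.choose j₀ ((a : ℕ) - c) * Nat.choose (b : ℕ) c : ℕ) : ℤ) := by
          apply Finset.sum_congr rfl
          intro c hc
          rw [Finset.mem_range] at hc
          exact if_pos (by omega)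
      _ = (Matrix.of fun a b : Fin (s + 1) =>
            ((Nat.choose (j₀ + (b : ℕ)) (a : ℕ) : ℕ) : ℤ)) a b := by
          rw [Matrix.of_apply, ← Nat.cast_sum, ← choose_window]
  rw [hfact, Matrix.det_mul]
  have hdL : L.det = 1 := by
    rw [Matrix.det_of_lowerTriangular L (fun i j hij => by
      simp only [hL, Matrix.of_apply]
      rw [if_neg]
      exact fun h => absurd (Fin.le_def.mpr h) (not_le.mpr hij))]
    apply Finset.prod_eq_one
    intro i _
    simp [hL]
  have hdU : U.det = 1 := by
    have htri : U.BlockTriangular id := by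
      intro i j hij
      simp only [hU, Matrix.of_apply]
      have : (j : ℕ) < (i : ℕ) := hij
      rw [Nat.choose_eq_zero_of_lt this]
      rfl
    rw [Matrix.det_of_upperTriangular htri]
    apply Finset.prod_eq_one
    intro i _
    simp [hU]
  rw [hdL, hdU, mul_one]

end IntBasis

namespace IntBasis

variable {k : ℕ}

section Tri

variable (M : Fin (k + 1) → ℕ) (n : ℕ)
variable (eF : ∀ l : ℕ, l ≤ totalM (Mres M) →
  (Pel (Mres M) l ≃ Gen (Mres M) (min l (totalM (Mres M) - l))))

/-- an injective encoding of the underlying tuples -/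
noncomputable def enc : (∀ i : Fin k, Fin (Mres M i + 1)) → ℕ :=
  fun v => ((Fintype.equivFin (∀ i : Fin k, Fin (Mres M i + 1))) v : ℕ)

lemma enc_inj {v w : ∀ i : Fin k, Fin (Mres M i + 1)} (h : enc M v = enc M w) :
    v = w :=
  (Fintype.equivFin _).injective (Fin.ext h)

/-- the grading of rows by (dual of) generator level, with tie-breaking code -/
noncomputable def bgr (x : Row M n) : Lex (ℕ × ℕ) :=
  toLex (totalM (Mres M) - rowR x, enc M (rowA x).1)

lemma bgr_eq {x y : Row M n} (h : bgr M n x = bgr M n y) :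
    rowR x = rowR y ∧ (rowA x).1 = (rowA y).1 := by
  have h' := toLex.injective h
  rw [Prod.mk.injEq] at h'
  have h1 := row_r_le_min x
  have h2 := row_r_le_min y
  have h3 := h'.1
  exact ⟨by omega, enc_inj M h'.2⟩

variable (hn : n ≤ totalM M)

/-- the square transition matrix -/
noncomputable def Ssq : Matrix (Row M n) (Row M n) ℤ :=
  Matrix.of fun x y => Smat n eF x (ErowFun eF hn y)

lemma Ssq_tri : (Ssq M n eF hn).BlockTriangular (bgr M n) := by
  intro x y hlt
  show Smat n eF x (ErowFun eF hn y) = 0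
  have hz2 : eF (n - ((ErowFun eF hn y).1.1 : ℕ)) (col_le (ErowFun eF hn y))
      (ErowFun eF hn y).2 = gAt hn y := Equiv.apply_symm_apply _ _
  rw [Smat]
  simp only [Matrix.of_apply]
  by_cases hov : totalM (Mres M) < (n - ((ErowFun eF hn y).1.1 : ℕ)) + rowR x
  · exfalso
    have hry : rowR y ≤ totalM (Mres M) - (n - ((ErowFun eF hn y).1.1 : ℕ)) :=
      (erow_facts hn y).2.2.2.2.2
    have hle : n - ((ErowFun eF hn y).1.1 : ℕ) ≤ totalM (Mres M) :=
      (erow_facts hn y).2.2.2.1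
    have h1 : rowR y < rowR x := by omega
    have h2 := row_r_le_min x
    have h3 := row_r_le_min y
    rw [bgr, bgr, Prod.Lex.lt_iff] at hlt
    rcases hlt with h | ⟨h, _⟩ <;> simp only [ofLex_toLex] at h <;> omega
  · rw [if_neg hov]
    apply if_neg
    intro hfun
    have hvals : ∀ i, ((rowA y).1 i : ℕ) = ((rowA x).1 i : ℕ) := by
      intro i
      have := congrFun hfun i
      rw [hz2] at this
      exact this
    have hsame : (rowA y).1 = (rowA x).1 := funext fun i => Fin.ext (hvals i)
    have hr : rowR y = rowR x := by
      have e1 := (rowA y).2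
      have e2 := (rowA x).2
      rw [← e1, ← e2]
      exact Finset.sum_congr rfl fun i _ => hvals i
    have : bgr M n x = bgr M n y := by rw [bgr, bgr, hsame, hr]
    rw [this] at hlt
    exact lt_irrefl _ hlt

/-- size of the diagonal window block of a row -/
def sWin (x₀ : Row M n) : ℕ :=
  min (M (Fin.last k)) (min (totalM (Mres M) - 2 * rowR x₀)
    (min n (totalM M - n) - rowR x₀))

lemma sWin_def (x₀ : Row M n) : sWin M n x₀ = min (M (Fin.last k))
    (min (totalM (Mres M) - 2 * rowR x₀) (min n (totalM M - n) - rowR x₀)) := rfl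

lemma sWin_les (x₀ : Row M n) : sWin M n x₀ ≤ M (Fin.last k) ∧
    sWin M n x₀ ≤ totalM (Mres M) - 2 * rowR x₀ ∧
    sWin M n x₀ ≤ min n (totalM M - n) - rowR x₀ := by
  rw [sWin_def]
  exact ⟨min_le_left _ _, le_trans (min_le_right _ _) (min_le_left _ _),
    le_trans (min_le_right _ _) (min_le_right _ _)⟩

lemma rowOf_bgr (r₀ : ℕ) (α : Pel (Mres M) r₀) (hα : α ∈ ballotA (Mres M) r₀)
    (t : ℕ) (ht : t ≤ M (Fin.last k)) (h2 : 2 * r₀ + t ≤ totalM (Mres M))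
    (hm : r₀ + t ≤ min n (totalM M - n)) :
    bgr M n (rowOf r₀ α hα t ht h2 hm) = toLex (totalM (Mres M) - r₀, enc M α.1) := by
  rw [bgr]
  have h1 : rowR (rowOf r₀ α hα t ht h2 hm : Row M n) = r₀ :=
    rowOf_rowR (M := M) (n := n) r₀ α hα t ht h2 hm
  have h3 : (rowA (rowOf r₀ α hα t ht h2 hm : Row M n)).1 = α.1 :=
    funext fun i => Fin.ext (rowOf_init (M := M) (n := n) r₀ α hα t ht h2 hm i)
  exact congrArg toLex (congrArg₂ Prod.mk (by rw [h1]) (congrArg (enc M) h3))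

/-- the window equivalence for a diagonal block -/
noncomputable def blockEquiv (x₀ : Row M n) :
    {x : Row M n // bgr M n x = bgr M n x₀} ≃ Fin (sWin M n x₀ + 1) where
  toFun y := ⟨rowT y.1, by
    have hb := (bgr_eq M n y.2).1
    have h2 := (row_ballot y.1).2
    have hm := row_m_le y.1
    have hs := row_sum y.1
    have ht := row_t_le y.1
    have hm0 := row_m_le x₀
    have hs0 := row_sum x₀
    rw [sWin_def]
    omega⟩
  invFun t :=
    ⟨rowOf (rowR x₀) (rowA x₀) (rowA_mem x₀) (t : ℕ)
      (by have h1 : (t : ℕ) ≤ sWin M n x₀ := t.is_le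
          have hw := sWin_les M n x₀
          omega)
      (by have h1 : (t : ℕ) ≤ sWin M n x₀ := t.is_le
          have hw := sWin_les M n x₀
          have hr0 := row_r_le_min x₀
          omega)
      (by have h1 : (t : ℕ) ≤ sWin M n x₀ := t.is_le
          have hw := sWin_les M n x₀
          have hm0 := row_m_le x₀
          have hs0 := row_sum x₀
          omega), by
      rw [rowOf_bgr, bgr]⟩
  left_inv y := by
    have hb1 := (bgr_eq M n y.2).1
    have hb2 := (bgr_eq M n y.2).2
    have h2 := (row_ballot y.1).2
    have hm := row_m_le y.1
    have hs := row_sum y.1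
    have htl := row_t_le y.1
    have pf1 : rowT y.1 ≤ M (Fin.last k) := htl
    have pf2 : 2 * rowR x₀ + rowT y.1 ≤ totalM (Mres M) := by omega
    have pf3 : rowR x₀ + rowT y.1 ≤ min n (totalM M - n) := by omega
    apply Subtype.ext
    apply genExt
    intro i
    induction i using Fin.lastCases with
    | last => exact rowOf_last (rowR x₀) (rowA x₀) (rowA_mem x₀) (rowT y.1) pf1 pf2 pf3
    | cast i =>
      exact (rowOf_init (rowR x₀) (rowA x₀) (rowA_mem x₀) (rowT y.1) pf1 pf2 pf3 i).trans
        (congrArg Fin.val (congrFun hb2 i)).symm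
  right_inv t := by
    have hw := sWin_les M n x₀
    have h1 : (t : ℕ) ≤ sWin M n x₀ := t.is_le
    have hr0 := row_r_le_min x₀
    have hm0 := row_m_le x₀
    have hs0 := row_sum x₀
    have pf1 : (t : ℕ) ≤ M (Fin.last k) := by omega
    have pf2 : 2 * rowR x₀ + (t : ℕ) ≤ totalM (Mres M) := by omega
    have pf3 : rowR x₀ + (t : ℕ) ≤ min n (totalM M - n) := by omega
    exact Fin.ext (rowOf_rowT (rowR x₀) (rowA x₀) (rowA_mem x₀) (t : ℕ) pf1 pf2 pf3)

lemma Ssq_block_det (a : Lex (ℕ × ℕ)) (ha : a ∈ Finset.image (bgr M n) Finset.univ) :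
    ((Ssq M n eF hn).toSquareBlock (bgr M n) a).det = 1 := by
  obtain ⟨x₀, -, rfl⟩ := Finset.mem_image.mp ha
  have hmat : (Ssq M n eF hn).toSquareBlock (bgr M n) (bgr M n x₀)
      = (Matrix.of fun a b : Fin (sWin M n x₀ + 1) =>
          ((Nat.choose (j0 M n (rowR x₀) + (b : ℕ)) (a : ℕ) : ℕ) : ℤ)).submatrix
          (blockEquiv M n hn x₀) (blockEquiv M n hn x₀) := by
    ext y y'
    rw [Matrix.toSquareBlock_def]
    have hry' : rowR y'.1 = rowR x₀ := (bgr_eq M n y'.2).1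
    have hry : rowR y.1 = rowR x₀ := (bgr_eq M n y.2).1
    have hz2 : eF (n - ((ErowFun eF hn y'.1).1.1 : ℕ)) (col_le (ErowFun eF hn y'.1))
        (ErowFun eF hn y'.1).2 = gAt hn y'.1 := Equiv.apply_symm_apply _ _
    have hf4 : n - ((ErowFun eF hn y'.1).1.1 : ℕ) ≤ totalM (Mres M) :=
      (erow_facts hn y'.1).2.2.2.1
    have hf6 : rowR y'.1 ≤ totalM (Mres M) - (n - ((ErowFun eF hn y'.1).1.1 : ℕ)) :=
      (erow_facts hn y'.1).2.2.2.2.2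
    show Smat n eF y.1 (ErowFun eF hn y'.1) = _
    rw [Smat]
    simp only [Matrix.of_apply]
    rw [if_neg (by omega)]
    rw [if_pos (by
      funext i
      have h1 := congrFun (bgr_eq M n y'.2).2 i
      have h2 := congrFun (bgr_eq M n y.2).2 i
      rw [hz2]
      show ((rowA y'.1).1 i : ℕ) = ((rowA y.1).1 i : ℕ)
      rw [h1, h2])]
    have hval : ((ErowFun eF hn y'.1).1.1 : ℕ) = j0 M n (rowR x₀) + rowT y'.1 := by
      show j0 M n (rowR y'.1) + rowT y'.1 = _
      rw [hry']
    rw [hval]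
    rfl
  rw [hmat, Matrix.det_submatrix_equiv_self, det_window]

lemma Ssq_det : (Ssq M n eF hn).det = 1 := by
  rw [(Ssq_tri M n eF hn).det]
  exact Finset.prod_eq_one fun a ha => Ssq_block_det M n eF hn a ha

end Tri

end IntBasis

namespace IntBasis

variable {k : ℕ}

section VmatDet

variable (M : Fin (k + 1) → ℕ) (n : ℕ)
variable (eF : ∀ l : ℕ, l ≤ totalM (Mres M) →
  (Pel (Mres M) l ≃ Gen (Mres M) (min l (totalM (Mres M) - l))))

lemma Vmat_tri : (Vmat n eF).BlockTriangular (fun z : ColIdx M n => (z.1.1 : ℕ)) := by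
  intro z w h
  have h' : (w.1.1 : ℕ) < (z.1.1 : ℕ) := h
  show (if (z.1.1 : ℕ) = (w.1.1 : ℕ) then _ else 0) = 0
  rw [if_neg]
  omega

/-- fiber equivalence for the diagonal blocks of `Vmat` -/
def fibEquiv (z₀ : ColIdx M n) :
    {z : ColIdx M n // (z.1.1 : ℕ) = (z₀.1.1 : ℕ)} ≃ Pel (Mres M) (n - (z₀.1.1 : ℕ)) where
  toFun z := cast (by rw [z.2]) z.1.2
  invFun γ := ⟨⟨z₀.1, γ⟩, rfl⟩
  left_inv z := by
    obtain ⟨⟨j, γ⟩, h⟩ := z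
    have hj : j = z₀.1 := Subtype.ext (Fin.ext h)
    subst hj
    apply Subtype.ext
    simp [cast_eq]
  right_inv γ := by simp [cast_eq]

lemma Vmat_block_det (a : ℕ)
    (ha : a ∈ Finset.image (fun z : ColIdx M n => (z.1.1 : ℕ)) Finset.univ)
    (hF : ∀ l hl, IsUnit (Bsq M eF l hl).det) :
    IsUnit (((Vmat n eF).toSquareBlock (fun z : ColIdx M n => (z.1.1 : ℕ)) a).det) := by
  obtain ⟨z₀, -, rfl⟩ := Finset.mem_image.mp ha
  have hmat : (Vmat n eF).toSquareBlock (fun z : ColIdx M n => (z.1.1 : ℕ)) ((z₀.1.1 : ℕ))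
      = (Bsq M eF (n - (z₀.1.1 : ℕ)) (col_le z₀)).submatrix
          (fibEquiv M n z₀) (fibEquiv M n z₀) := by
    ext z w
    obtain ⟨⟨j, γ⟩, h⟩ := z
    obtain ⟨⟨j', γ'⟩, h'⟩ := w
    have hj : j = z₀.1 := Subtype.ext (Fin.ext h)
    subst hj
    have hj' : j' = z₀.1 := Subtype.ext (Fin.ext h')
    subst hj'
    rw [Matrix.toSquareBlock_def]
    show Vmat n eF ⟨z₀.1, γ⟩ ⟨z₀.1, γ'⟩ = _
    rw [Vmat]
    simp only [Matrix.of_apply, eq_self_iff_true, if_true, Matrix.submatrix_apply,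
      fibEquiv, Bsq, Equiv.coe_fn_mk, cast_eq]
  rw [hmat, Matrix.det_submatrix_equiv_self]
  exact hF _ _
  
lemma Vmat_det (hF : ∀ l hl, IsUnit (Bsq M eF l hl).det) : IsUnit (Vmat n eF).det := by
  rw [(Vmat_tri M n eF).det]
  exact Finset.prod_induction _ IsUnit (fun a b => IsUnit.mul) isUnit_one
    (fun a ha => Vmat_block_det M n eF a ha hF)

end VmatDet

section Step

variable (M : Fin (k + 1) → ℕ) (n : ℕ)
variable (eF : ∀ l : ℕ, l ≤ totalM (Mres M) →
  (Pel (Mres M) l ≃ Gen (Mres M) (min l (totalM (Mres M) - l))))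

theorem step (hn : n ≤ totalM M) (hF : ∀ l hl, IsUnit (Bsq M eF l hl).det) :
    ∃ e : Pel M n ≃ Gen M (min n (totalM M - n)),
      IsUnit (Matrix.det (Matrix.of fun x y : Pel M n =>
        ((uEntry M ((e x).2.1) y : ℕ) : ℤ))) := by
  set E := Erow eF hn with hE
  set e : Pel M n ≃ Gen M (min n (totalM M - n)) := (ePel M n).trans E.symm with he
  refine ⟨e, ?_⟩
  set W : Matrix (Pel M n) (Pel M n) ℤ :=
    Matrix.of fun x y : Pel M n => ((uEntry M ((e x).2.1) y : ℕ) : ℤ) with hW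
  rw [show W.det = (W.submatrix e.symm e.symm).det from
    (Matrix.det_submatrix_equiv_self e.symm W).symm]
  have hGmat : W.submatrix e.symm e.symm
      = Ssq M n eF hn * (Vmat n eF).submatrix E E := by
    ext x y
    have h1 : (W.submatrix e.symm e.symm) x y
        = ((uEntry M x.2.1 ((ePel M n).symm (E y)) : ℕ) : ℤ) := by
      show ((uEntry M ((e (e.symm x)).2.1) (e.symm y) : ℕ) : ℤ) = _
      rw [Equiv.apply_symm_apply e x]
      rfl
    rw [h1, key_identity eF hF x (E y), Matrix.mul_apply]
    refine (Equiv.sum_comp E fun z => Smat n eF x z * Vmat n eF z (E y)).symm.trans ?_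
    apply Finset.sum_congr rfl
    intro x' _
    rfl
  rw [hGmat, Matrix.det_mul]
  exact IsUnit.mul (by rw [Ssq_det]; exact isUnit_one)
    (by rw [Matrix.det_submatrix_equiv_self E]; exact Vmat_det M n eF hF)

end Step

end IntBasis

namespace IntBasis

theorem inv_main : ∀ (k : ℕ) (M : Fin k → ℕ) (n : ℕ), n ≤ totalM M →
    ∃ e : Pel M n ≃ Gen M (min n (totalM M - n)),
      IsUnit (Matrix.det (Matrix.of fun x y : Pel M n =>
        ((uEntry M ((e x).2.1) y : ℕ) : ℤ))) := by
  intro k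
  induction k with
  | zero =>
    intro M n hn
    have h0 : totalM M = 0 := by simp [totalM]
    have hn0 : n = 0 := by omega
    subst hn0
    have p0 : Pel M 0 := ⟨fun i => i.elim0, by simp⟩
    have hu1 : Unique (Pel M 0) := ⟨⟨p0⟩, fun x => pelExt x p0 (fun i => i.elim0)⟩
    have hu2 : Unique (Gen M (min 0 (totalM M - 0))) :=
      ⟨⟨⟨⟨0, by omega⟩, ⟨⟨fun i => i.elim0, by simp⟩, mem_ballotA.mpr rfl⟩⟩⟩,
        fun g => genExt _ _ (fun i => i.elim0)⟩
    refine ⟨@Equiv.ofUnique _ _ hu1 hu2, ?_⟩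
    rw [@Matrix.det_unique _ _ _ hu1 _ _]
    show IsUnit ((uEntry M _ _ : ℕ) : ℤ)
    rw [uEntry]
    simp
  | succ k ih =>
    intro M n hn
    choose eF hF using fun (l : ℕ) (hl : l ≤ totalM (Mres M)) => ih (Mres M) l hl
    exact step M n eF hn hF

theorem inv_main' (k : ℕ) (M : Fin k → ℕ) (n : ℕ) (mtop : ℕ)
    (hm : mtop = min n (totalM M - n)) (hn : n ≤ totalM M) :
    ∃ e : Pel M n ≃ Gen M mtop,
      IsUnit (Matrix.det (Matrix.of fun x y : Pel M n =>
        ((uEntry M ((e x).2.1) y : ℕ) : ℤ))) := by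
  subst hm
  exact inv_main k M n hn

lemma card_gen (k : ℕ) (M : Fin k → ℕ) (mtop : ℕ) :
    Fintype.card (Gen M mtop) = ∑ j : Fin (mtop + 1), (ballotA M (j : ℕ)).card := by
  rw [Fintype.card_sigma]
  exact Finset.sum_congr rfl fun j _ => Fintype.card_coe _

lemma card_pel_eq (k : ℕ) (M : Fin k → ℕ) (m : ℕ) (hm : 2 * m ≤ totalM M) :
    Fintype.card (Pel M m) = ∑ j : Fin (m + 1), (ballotA M (j : ℕ)).card := by
  obtain ⟨e, -⟩ := inv_main' k M m m (by omega) (by omega)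
  rw [Fintype.card_congr e, card_gen]

end IntBasis

/-- There exist subsets `A m ⊆ P_m^M` for `0 ≤ m ≤ |M|/2` with
`#(A m) = p_m - p_{m-1}` (stated additively), such that for every `n` with `2n ≤ |M|`
the family `B_n = ⋃_{m ≤ n} (U_M^(n-m)/(n-m)!) '' (A m)` is a `ℤ`-basis of `ℤP_n^M`
(i.e. it is linearly independent over `ℤ` and spans). -/
theorem exists_integral_basis {k : ℕ} (hk : 1 ≤ k) (M : Fin k → ℕ) :
    ∃ A : (m : ℕ) → Finset (Pel M m),
      (∀ m : ℕ, 2 * m ≤ totalM M →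
        (A m).card + prevP M m = Fintype.card (Pel M m)) ∧
      (∀ n : ℕ, 2 * n ≤ totalM M →
        LinearIndependent ℤ (bFam M A n n) ∧
        Submodule.span ℤ (Set.range (bFam M A n n)) = ⊤) := by
  refine ⟨fun m => IntBasis.ballotA M m, ?_, ?_⟩
  · intro m hm
    match m with
    | 0 =>
      have h := IntBasis.card_pel_eq k M 0 (by omega)
      rw [h]
      show (IntBasis.ballotA M 0).card + 0 = _
      rw [Fin.sum_univ_one]
      rfl
    | m + 1 =>
      have h1 := IntBasis.card_pel_eq k M (m + 1) hm
      have h2 := IntBasis.card_pel_eq k M m (by omega)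
      rw [Fin.sum_univ_castSucc] at h1
      simp only [Fin.coe_castSucc, Fin.val_last] at h1
      show (IntBasis.ballotA M (m + 1)).card + Fintype.card (Pel M m)
        = Fintype.card (Pel M (m + 1))
      omega
  · intro n hn2
    obtain ⟨e, hdet⟩ := IntBasis.inv_main' k M n n (by omega) (by omega)
    have hls := IntBasis.unimodular_rows _ hdet
    have hcomp : (fun i => (Matrix.of fun x y : Pel M n =>
        ((uEntry M ((e x).2.1) y : ℕ) : ℤ)) i)
        = (bFam M (fun m => IntBasis.ballotA M m) n n) ∘ e := rfl
    constructor
    · exact (linearIndependent_equiv e).mp (hcomp ▸ hls.1)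
    · rw [← Function.Surjective.range_comp e.surjective
        (bFam M (fun m => IntBasis.ballotA M m) n n), ← hcomp]
      exact hls.2
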